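/- Let Q and Q̃ be positive definite symmetric n×n real matrices and v, ṽ ∈ ℝⁿ. The shifted ellipsoids {y + v : yᵀQy = 1} and {y + ṽ : yᵀQ̃y = 1} in ℝⁿ can be mapped to each other by an invertible linear transformation if and only if vᵀQv = ṽᵀQ̃ṽ. -/

import Mathlib

open Matrix

private lemma quadSymm {n : ℕ} {M : Matrix (Fin n) (Fin n) ℝ} (hM : Mᵀ = M)
    (x y : Fin n → ℝ) : x ⬝ᵥ M *ᵥ y = y ⬝ᵥ M *ᵥ x := by
  rw [dotProduct_mulVec, ← mulVec_transpose, hM, dotProduct_comm]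

private lemma quadSmul {n : ℕ} (M : Matrix (Fin n) (Fin n) ℝ) (s : ℝ) (x : Fin n → ℝ) :
    (s • x) ⬝ᵥ M *ᵥ (s • x) = s ^ 2 * (x ⬝ᵥ M *ᵥ x) := by
  rw [smul_dotProduct, mulVec_smul, dotProduct_smul, smul_eq_mul, smul_eq_mul]
  ring

private lemma dotSq {n : ℕ} {A Q : Matrix (Fin n) (Fin n) ℝ} (hA2 : A * A = Q)
    (hAT : Aᵀ = A) (x : Fin n → ℝ) : (A *ᵥ x) ⬝ᵥ (A *ᵥ x) = x ⬝ᵥ Q *ᵥ x := by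
  rw [← hA2, ← mulVec_mulVec, dotProduct_mulVec x A (A *ᵥ x), ← mulVec_transpose, hAT]

/-- Householder reflection (identity when `w = 0`). -/
noncomputable def reflMap {n : ℕ} (w : Fin n → ℝ) : (Fin n → ℝ) →ₗ[ℝ] (Fin n → ℝ) where
  toFun x := x - (2 * (w ⬝ᵥ x) / (w ⬝ᵥ w)) • w
  map_add' x y := by
    funext i
    simp only [dotProduct_add, Pi.add_apply, Pi.sub_apply, Pi.smul_apply, smul_eq_mul]
    ring
  map_smul' s x := by
    funext i
    simp only [dotProduct_smul, smul_eq_mul, RingHom.id_apply, Pi.smul_apply, Pi.sub_apply]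
    ring

private lemma reflMap_apply {n : ℕ} (w x : Fin n → ℝ) :
    reflMap w x = x - (2 * (w ⬝ᵥ x) / (w ⬝ᵥ w)) • w := rfl

private lemma reflMap_dot {n : ℕ} (w x : Fin n → ℝ) :
    (reflMap w x) ⬝ᵥ (reflMap w x) = x ⬝ᵥ x := by
  by_cases hw : w ⬝ᵥ w = 0
  · have : w = 0 := dotProduct_self_eq_zero.1 hw
    simp [reflMap_apply, this]
  · rw [reflMap_apply, sub_dotProduct, dotProduct_sub, dotProduct_sub,
      smul_dotProduct, dotProduct_smul, smul_dotProduct, dotProduct_comm x w]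
    simp only [dotProduct_smul, smul_eq_mul]
    field_simp
    ring

private lemma reflMap_invol {n : ℕ} (w x : Fin n → ℝ) : reflMap w (reflMap w x) = x := by
  by_cases hw : w ⬝ᵥ w = 0
  · have h0 : w = 0 := dotProduct_self_eq_zero.1 hw
    simp [reflMap_apply, h0]
  · rw [reflMap_apply, reflMap_apply, dotProduct_sub, dotProduct_smul, smul_eq_mul]
    have h1 : 2 * (w ⬝ᵥ x - 2 * (w ⬝ᵥ x) / (w ⬝ᵥ w) * (w ⬝ᵥ w)) / (w ⬝ᵥ w)
        = -(2 * (w ⬝ᵥ x) / (w ⬝ᵥ w)) := by field_simp; ring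
    rw [h1, neg_smul, sub_neg_eq_add]
    abel

private lemma reflMap_maps {n : ℕ} {a b : Fin n → ℝ} (h : a ⬝ᵥ a = b ⬝ᵥ b) :
    reflMap (a - b) a = b := by
  by_cases hw : (a - b) ⬝ᵥ (a - b) = 0
  · have h0 : a - b = 0 := dotProduct_self_eq_zero.1 hw
    rw [reflMap_apply, h0, smul_zero, sub_zero]
    exact sub_eq_zero.1 h0
  · have hc : 2 * ((a - b) ⬝ᵥ a) = (a - b) ⬝ᵥ (a - b) := by
      rw [sub_dotProduct, sub_dotProduct, dotProduct_sub, dotProduct_sub, dotProduct_comm b a]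
      linarith
    rw [reflMap_apply, hc, div_self hw, one_smul, sub_sub_cancel]

open scoped MatrixOrder in
private lemma exists_sym_sqrt {n : ℕ} {Q : Matrix (Fin n) (Fin n) ℝ} (hQ : Q.PosSemidef) :
    ∃ A : Matrix (Fin n) (Fin n) ℝ, A * A = Q ∧ Aᵀ = A := by
  refine ⟨CFC.sqrt Q, CFC.sqrt_mul_sqrt_self Q hQ.nonneg, ?_⟩
  rw [← conjTranspose_eq_transpose_of_trivial]
  exact (CFC.sqrt_nonneg Q).posSemidef.1

theorem stmt3 (n : ℕ) (Q Qt : Matrix (Fin n) (Fin n) ℝ)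
    (hQ : Q.PosDef) (hQt : Qt.PosDef) (v vt : Fin n → ℝ) :
    (∃ L : (Fin n → ℝ) ≃ₗ[ℝ] (Fin n → ℝ),
        L '' {z | ∃ y : Fin n → ℝ, y ⬝ᵥ Q *ᵥ y = 1 ∧ z = y + v}
          = {z | ∃ y : Fin n → ℝ, y ⬝ᵥ Qt *ᵥ y = 1 ∧ z = y + vt})
      ↔ v ⬝ᵥ Q *ᵥ v = vt ⬝ᵥ Qt *ᵥ vt := by
  constructor
  · rintro ⟨L, hL⟩
    rcases Nat.eq_zero_or_pos n with hn | hn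
    · subst hn
      simp [dotProduct]
    have hQtT : Qtᵀ = Qt := by
      rw [← conjTranspose_eq_transpose_of_trivial]
      exact hQt.1
    have hfwd : ∀ y, y ⬝ᵥ Q *ᵥ y = 1 →
        ∃ y', y' ⬝ᵥ Qt *ᵥ y' = 1 ∧ L (y + v) = y' + vt := by
      intro y hy
      have hmem : L (y + v) ∈ {z | ∃ y', y' ⬝ᵥ Qt *ᵥ y' = 1 ∧ z = y' + vt} := by
        rw [← hL]; exact Set.mem_image_of_mem _ ⟨y, hy, rfl⟩
      exact hmem
    have hbwd : ∀ y', y' ⬝ᵥ Qt *ᵥ y' = 1 →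
        ∃ y, y ⬝ᵥ Q *ᵥ y = 1 ∧ y' + vt = L (y + v) := by
      intro y' hy'
      have hmem : y' + vt ∈ L '' {z | ∃ y, y ⬝ᵥ Q *ᵥ y = 1 ∧ z = y + v} := by
        rw [hL]; exact ⟨y', hy', rfl⟩
      obtain ⟨z, ⟨y, hy, rfl⟩, hz⟩ := hmem
      exact ⟨y, hy, hz.symm⟩
    obtain ⟨e, he⟩ : ∃ e, e ⬝ᵥ Qt *ᵥ e = 1 := by
      set u : Fin n → ℝ := Pi.single ⟨0, hn⟩ 1 with hu
      have hu0 : u ≠ 0 := by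
        intro h0
        have h1 := congrFun h0 ⟨0, hn⟩
        simp [hu] at h1
      have hpos : 0 < u ⬝ᵥ Qt *ᵥ u := by simpa using hQt.dotProduct_mulVec_pos hu0
      refine ⟨(Real.sqrt (u ⬝ᵥ Qt *ᵥ u))⁻¹ • u, ?_⟩
      rw [quadSmul, inv_pow, Real.sq_sqrt hpos.le, inv_mul_cancel₀ hpos.ne']
    have hcen : ∀ y', y' ⬝ᵥ Qt *ᵥ y' = 1 →
        (L v - vt) ⬝ᵥ Qt *ᵥ (L v - vt) = (L v - vt) ⬝ᵥ Qt *ᵥ y' := by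
      intro y' hy'
      obtain ⟨y, hy, hz⟩ := hbwd y' hy'
      have hy2 : (-y) ⬝ᵥ Q *ᵥ (-y) = 1 := by
        rw [neg_dotProduct, mulVec_neg, dotProduct_neg, neg_neg]; exact hy
      obtain ⟨y'', hy'', hz2⟩ := hfwd (-y) hy2
      have key : y'' = (2:ℝ) • (L v - vt) - y' := by
        have e1 : (-y) + v = (2:ℝ) • v - (y + v) := by
          funext i; simp; ring
        have e2 : L ((-y) + v) = (2:ℝ) • L v - L (y + v) := by
          rw [e1, map_sub, _root_.map_smul]
        rw [hz2, ← hz] at e2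
        funext i
        have e3 := congrFun e2 i
        simp only [Pi.add_apply, Pi.sub_apply, Pi.smul_apply, smul_eq_mul] at e3 ⊢
        linarith
      rw [key] at hy''
      have hexp : ((2:ℝ) • (L v - vt) - y') ⬝ᵥ Qt *ᵥ ((2:ℝ) • (L v - vt) - y')
          = 4 * ((L v - vt) ⬝ᵥ Qt *ᵥ (L v - vt)) - 4 * ((L v - vt) ⬝ᵥ Qt *ᵥ y')
            + y' ⬝ᵥ Qt *ᵥ y' := by
        simp only [sub_dotProduct, dotProduct_sub, mulVec_sub, mulVec_smul,
          smul_dotProduct, dotProduct_smul, smul_eq_mul]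
        rw [quadSymm hQtT y' (L v), quadSymm hQtT y' vt, quadSymm hQtT (L v) vt]
        ring
      rw [hexp, hy'] at hy''
      linarith
    have hd : L v = vt := by
      have h1 := hcen e he
      have he2 : (-e) ⬝ᵥ Qt *ᵥ (-e) = 1 := by
        rw [neg_dotProduct, mulVec_neg, dotProduct_neg, neg_neg]; exact he
      have h2 := hcen (-e) he2
      rw [mulVec_neg, dotProduct_neg] at h2
      have h0 : (L v - vt) ⬝ᵥ Qt *ᵥ (L v - vt) = 0 := by linarith
      by_contra hne
      have hne0 : L v - vt ≠ 0 := sub_ne_zero.2 hne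
      have hpos : 0 < (L v - vt) ⬝ᵥ Qt *ᵥ (L v - vt) := by
        simpa using hQt.dotProduct_mulVec_pos hne0
      linarith
    by_cases hv : v = 0
    · have hvt : vt = 0 := by rw [← hd, hv, map_zero]
      rw [hv, hvt]
      simp
    · have hvQ : 0 < v ⬝ᵥ Q *ᵥ v := by simpa using hQ.dotProduct_mulVec_pos hv
      set s := Real.sqrt (v ⬝ᵥ Q *ᵥ v) with hs
      have hspos : 0 < s := Real.sqrt_pos.2 hvQ
      have hy1 : (s⁻¹ • v) ⬝ᵥ Q *ᵥ (s⁻¹ • v) = 1 := by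
        rw [quadSmul, inv_pow, hs, Real.sq_sqrt hvQ.le, inv_mul_cancel₀ hvQ.ne']
      obtain ⟨y', hy', hz⟩ := hfwd _ hy1
      have hLy : (s⁻¹ • vt) = y' := by
        have h1 : L (s⁻¹ • v + v) = L (s⁻¹ • v) + L v := map_add _ _ _
        rw [hz, hd] at h1
        have h2 : y' = L (s⁻¹ • v) := by
          exact add_right_cancel h1
        rw [h2, _root_.map_smul, hd]
      rw [← hLy, quadSmul, inv_pow, hs] at hy'
      have hsq : Real.sqrt (v ⬝ᵥ Q *ᵥ v) ^ 2 = v ⬝ᵥ Q *ᵥ v := Real.sq_sqrt hvQ.le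
      rw [hsq] at hy'
      field_simp at hy'
      linarith
  · intro h
    obtain ⟨A, hA2, hAT⟩ := exists_sym_sqrt hQ.posSemidef
    obtain ⟨B, hB2, hBT⟩ := exists_sym_sqrt hQt.posSemidef
    have hAdet : IsUnit A.det := by
      have h1 : A.det * A.det = Q.det := by rw [← det_mul, hA2]
      refine isUnit_iff_ne_zero.2 fun h0 => ?_
      rw [h0, mul_zero] at h1
      exact hQ.det_pos.ne' h1.symm
    have hBdet : IsUnit B.det := by
      have h1 : B.det * B.det = Qt.det := by rw [← det_mul, hB2]
      refine isUnit_iff_ne_zero.2 fun h0 => ?_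
      rw [h0, mul_zero] at h1
      exact hQt.det_pos.ne' h1.symm
    have instA : Invertible A := A.invertibleOfIsUnitDet hAdet
    have instB : Invertible B := B.invertibleOfIsUnitDet hBdet
    set a := A *ᵥ v with hadef
    set b := B *ᵥ vt with hbdef
    have hab : a ⬝ᵥ a = b ⬝ᵥ b := by
      rw [hadef, hbdef, dotSq hA2 hAT, dotSq hB2 hBT]; exact h
    set w := a - b with hwdef
    have hcomp : (reflMap w).comp (reflMap w) = LinearMap.id :=
      LinearMap.ext fun x => reflMap_invol w x
    set F : (Fin n → ℝ) ≃ₗ[ℝ] (Fin n → ℝ) :=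
      LinearEquiv.ofLinear (reflMap w) (reflMap w) hcomp hcomp with hFdef
    set LA := A.toLinearEquiv' instA with hLAdef
    set LB := B.toLinearEquiv' instB with hLBdef
    have hLA : ∀ x, LA x = A *ᵥ x := fun x => by
      rw [← Matrix.toLin'_apply]
      exact LinearMap.congr_fun (Matrix.toLinearEquiv'_apply A instA) x
    have hLB : ∀ x, LB x = B *ᵥ x := fun x => by
      rw [← Matrix.toLin'_apply]
      exact LinearMap.congr_fun (Matrix.toLinearEquiv'_apply B instB) x
    set L : (Fin n → ℝ) ≃ₗ[ℝ] (Fin n → ℝ) := LA.trans (F.trans LB.symm) with hLdef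
    have hB_L : ∀ z, B *ᵥ (L z) = reflMap w (A *ᵥ z) := fun z => by
      rw [← hLB (L z), hLdef]
      simp only [LinearEquiv.trans_apply]
      rw [LinearEquiv.apply_symm_apply, ← hLA z]
      rfl
    have key : ∀ z, (z - v) ⬝ᵥ Q *ᵥ (z - v) = (L z - vt) ⬝ᵥ Qt *ᵥ (L z - vt) := by
      intro z
      have h1 : B *ᵥ (L z - vt) = reflMap w (A *ᵥ (z - v)) := by
        rw [mulVec_sub, hB_L z, mulVec_sub, ← hadef, ← hbdef, ← reflMap_maps hab, ← hwdef,
          ← map_sub]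
      calc (z - v) ⬝ᵥ Q *ᵥ (z - v)
          = (A *ᵥ (z - v)) ⬝ᵥ (A *ᵥ (z - v)) := (dotSq hA2 hAT _).symm
        _ = (reflMap w (A *ᵥ (z - v))) ⬝ᵥ (reflMap w (A *ᵥ (z - v))) := (reflMap_dot _ _).symm
        _ = (B *ᵥ (L z - vt)) ⬝ᵥ (B *ᵥ (L z - vt)) := by rw [h1]
        _ = (L z - vt) ⬝ᵥ Qt *ᵥ (L z - vt) := dotSq hB2 hBT _
    refine ⟨L, ?_⟩
    ext z'
    simp only [Set.mem_image, Set.mem_setOf_eq]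
    constructor
    · rintro ⟨z, ⟨y, hy, rfl⟩, rfl⟩
      refine ⟨L (y + v) - vt, ?_, by abel⟩
      rw [← key]
      have hyv : y + v - v = y := by abel
      rw [hyv]
      exact hy
    · rintro ⟨y', hy', rfl⟩
      refine ⟨L.symm (y' + vt), ⟨L.symm (y' + vt) - v, ?_, by abel⟩, L.apply_symm_apply _⟩
      rw [key, L.apply_symm_apply]
      have hyv : y' + vt - vt = y' := by abel
      rw [hyv]
      exact hy'
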